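/- Let N ≥ 3, N < t < ∞, σ ∈ ℝ, and β^- ∈ ℝ with β^- + σ < 0. Suppose b : (0,1) → ℝ satisfies ∫_s^{2s} |b(τ)|^t dτ ≤ M^t s^{1 - t(2+σ)} for all 0 < s ≤ 1/2. Then there is a constant D (depending on N, t, σ, β^-, M) such that r^{β^- + σ} ∫_0^r |b(τ)|/τ^{β^- - 1} dτ ≤ D for all 0 < r ≤ 1/2. -/

import Mathlib

open Real MeasureTheory

/-- Weighted zero-order estimate: r^{β+σ} ∫₀^r |b(τ)|/τ^{β-1} dτ is uniformly bounded. -/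
theorem weighted_integral_bound (N : ℕ) (hN : 3 ≤ N) (t σ β M : ℝ) (ht : (N : ℝ) < t)
    (hβ : β + σ < 0) (b : ℝ → ℝ) (hb : Measurable b)
    (hbd : ∀ s : ℝ, 0 < s → s ≤ 1 / 2 →
      ∫⁻ τ in Set.Ioc s (2 * s), ENNReal.ofReal (|b τ| ^ t) ≤
        ENNReal.ofReal (M ^ t * s ^ (1 - t * (2 + σ)))) :
    ∃ D : ℝ, ∀ r : ℝ, 0 < r → r ≤ 1 / 2 →
      ENNReal.ofReal (r ^ (β + σ)) *
        ∫⁻ τ in Set.Ioo (0:ℝ) r, ENNReal.ofReal (|b τ| / τ ^ (β - 1)) ≤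
      ENNReal.ofReal D := by
  classical
  have ht1 : (1:ℝ) < t := by
    have h3 : (3:ℝ) ≤ (N:ℝ) := by exact_mod_cast hN
    linarith
  have ht0 : (0:ℝ) < t := by linarith
  set e : ℝ := -(β + σ) with he_def
  have he : 0 < e := by rw [he_def]; linarith
  set c : ℝ := (2:ℝ) ^ (β + σ) with hc_def
  have hc0 : 0 < c := Real.rpow_pos_of_pos (by norm_num) _
  have hc1 : c < 1 := Real.rpow_lt_one_of_one_lt_of_neg (by norm_num) hβ
  set Cb : ℝ := max 1 ((2:ℝ) ^ (1 - β)) with hCb_def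
  have hCb1 : (1:ℝ) ≤ Cb := le_max_left _ _
  have hCb0 : (0:ℝ) ≤ Cb := by linarith
  set K : ℝ := Cb * |M| with hK_def
  have hK0 : (0:ℝ) ≤ K := mul_nonneg hCb0 (abs_nonneg _)
  have hq : t.HolderConjugate (Real.conjExponent t) :=
    Real.HolderConjugate.conjExponent ht1
  have hq1 : 1 / Real.conjExponent t = 1 - 1/t := by
    have h := hq.inv_add_inv_eq_one
    rw [one_div, one_div]
    linarith
  refine ⟨K * c * (1 - c)⁻¹, fun r hr hr2 => ?_⟩
  -- the block estimate
  have hblock : ∀ k : ℕ,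
      ∫⁻ τ in Set.Ioc (r / 2 ^ (k+1)) (r / 2 ^ k),
        ENNReal.ofReal (|b τ| / τ ^ (β - 1)) ≤
      ENNReal.ofReal (K * (r ^ e * c ^ (k+1))) := by
    intro k
    set s : ℝ := r / 2 ^ (k+1) with hs_def
    have h2k : (0:ℝ) < 2 ^ (k+1) := by positivity
    have hs0 : 0 < s := div_pos hr h2k
    have hs2 : s ≤ 1/2 := by
      have h1 : s ≤ r / 2 := by
        have h2 : (1:ℝ) ≤ 2 ^ k := one_le_pow₀ one_le_two
        rw [hs_def, div_le_div_iff₀ h2k two_pos, pow_succ]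
        nlinarith
      linarith
    have h2s : r / 2 ^ k = 2 * s := by
      rw [hs_def, pow_succ]
      field_simp
    rw [h2s]
    -- pointwise bound on the block
    have hmono : ∀ τ ∈ Set.Ioc s (2*s),
        ENNReal.ofReal (|b τ| / τ ^ (β - 1)) ≤
        ENNReal.ofReal (Cb * s ^ (1-β)) * ENNReal.ofReal |b τ| := by
      intro τ hτ
      have hτ0 : 0 < τ := lt_trans hs0 hτ.1
      rw [← ENNReal.ofReal_mul (by positivity)]
      apply ENNReal.ofReal_le_ofReal
      rw [div_eq_mul_inv, ← Real.rpow_neg hτ0.le, neg_sub]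
      have hw : τ ^ (1-β) ≤ Cb * s ^ (1-β) := by
        rcases le_or_gt 0 (1-β) with h1 | h1
        · have h2 : τ ^ (1-β) ≤ (2*s) ^ (1-β) :=
            Real.rpow_le_rpow hτ0.le hτ.2 h1
          rw [Real.mul_rpow (by norm_num) hs0.le] at h2
          refine h2.trans ?_
          exact mul_le_mul_of_nonneg_right (le_max_right _ _)
            (Real.rpow_nonneg hs0.le _)
        · have h2 : τ ^ (1-β) ≤ s ^ (1-β) :=
            Real.rpow_le_rpow_of_nonpos hs0 hτ.1.le h1.le
          refine h2.trans ?_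
          exact le_mul_of_one_le_left (Real.rpow_nonneg hs0.le _) hCb1
      calc |b τ| * τ ^ (1-β) ≤ |b τ| * (Cb * s ^ (1-β)) :=
            mul_le_mul_of_nonneg_left hw (abs_nonneg _)
        _ = Cb * s ^ (1-β) * |b τ| := by ring
    have hstep1 : ∫⁻ τ in Set.Ioc s (2*s), ENNReal.ofReal (|b τ| / τ ^ (β - 1)) ≤
        ENNReal.ofReal (Cb * s ^ (1-β)) *
          ∫⁻ τ in Set.Ioc s (2*s), ENNReal.ofReal |b τ| := by
      rw [← lintegral_const_mul' _ _ ENNReal.ofReal_ne_top]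
      exact setLIntegral_mono' measurableSet_Ioc hmono
    -- Hölder on the block
    have hholder := ENNReal.lintegral_mul_le_Lp_mul_Lq
      (volume.restrict (Set.Ioc s (2*s))) hq
      (f := fun τ => ENNReal.ofReal |b τ|) (g := fun _ => 1)
      (hb.abs.ennreal_ofReal).aemeasurable aemeasurable_const
    simp only [Pi.mul_apply, mul_one, ENNReal.one_rpow] at hholder
    have hvol : ∫⁻ (_ : ℝ) in Set.Ioc s (2*s), (1:ENNReal) = ENNReal.ofReal s := by
      rw [setLIntegral_one, Real.volume_Ioc]
      congr 1
      ring
    rw [hvol] at hholder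
    have hrw : ∀ τ : ℝ, ENNReal.ofReal |b τ| ^ t = ENNReal.ofReal (|b τ| ^ t) :=
      fun τ => ENNReal.ofReal_rpow_of_nonneg (abs_nonneg _) ht0.le
    simp only [hrw] at hholder
    have hLt : (∫⁻ τ in Set.Ioc s (2*s), ENNReal.ofReal (|b τ| ^ t)) ^ (1/t) ≤
        ENNReal.ofReal (|M| * s ^ ((1 - t*(2+σ))/t)) := by
      have h1 : (∫⁻ τ in Set.Ioc s (2*s), ENNReal.ofReal (|b τ| ^ t)) ^ (1/t) ≤
          (ENNReal.ofReal (|M| ^ t * s ^ (1 - t*(2+σ)))) ^ (1/t) := by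
        apply ENNReal.rpow_le_rpow _ (by positivity)
        refine (hbd s hs0 hs2).trans (ENNReal.ofReal_le_ofReal ?_)
        apply mul_le_mul_of_nonneg_right _ (Real.rpow_nonneg hs0.le _)
        exact (le_abs_self _).trans (Real.abs_rpow_le_abs_rpow M t)
      refine h1.trans (le_of_eq ?_)
      rw [ENNReal.ofReal_rpow_of_nonneg (by positivity) (by positivity)]
      congr 1
      rw [Real.mul_rpow (by positivity) (Real.rpow_nonneg hs0.le _),
        ← Real.rpow_mul (abs_nonneg M), ← Real.rpow_mul hs0.le,
        mul_one_div, div_self ht0.ne', Real.rpow_one, mul_one_div]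
    have hLq : (ENNReal.ofReal s) ^ (1 / Real.conjExponent t) =
        ENNReal.ofReal (s ^ (1 - 1/t)) := by
      rw [hq1, ENNReal.ofReal_rpow_of_nonneg hs0.le (by nlinarith [one_div_pos.2 ht0, one_div_le_one_div_of_le one_pos ht1.le])]
    rw [hLq] at hholder
    have h3 : ∫⁻ τ in Set.Ioc s (2*s), ENNReal.ofReal |b τ| ≤
        ENNReal.ofReal (|M| * s ^ ((1 - t*(2+σ))/t)) * ENNReal.ofReal (s ^ (1 - 1/t)) :=
      hholder.trans (mul_le_mul_left hLt _)
    -- combine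
    have hexp : s ^ (1-β) * (s ^ ((1 - t*(2+σ))/t) * s ^ (1 - 1/t)) = s ^ e := by
      rw [← Real.rpow_add hs0, ← Real.rpow_add hs0]
      congr 1
      rw [he_def]
      field_simp
      ring
    have hse : s ^ e = r ^ e * c ^ (k+1) := by
      have hck : c ^ (k+1) = (2:ℝ) ^ ((β+σ) * ((k+1 : ℕ) : ℝ)) := by
        rw [hc_def, ← Real.rpow_natCast ((2:ℝ) ^ (β+σ)) (k+1),
          ← Real.rpow_mul (by norm_num)]
      have hsk : s = r * (2:ℝ) ^ (-((k+1 : ℕ) : ℝ)) := by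
        rw [hs_def, Real.rpow_neg (by norm_num), Real.rpow_natCast, div_eq_mul_inv]
      rw [hsk, Real.mul_rpow hr.le (Real.rpow_nonneg (by norm_num) _),
        ← Real.rpow_mul (by norm_num : (0:ℝ) ≤ 2), hck]
      congr 1
      rw [he_def]
      ring
    calc ∫⁻ τ in Set.Ioc s (2*s), ENNReal.ofReal (|b τ| / τ ^ (β - 1))
        ≤ ENNReal.ofReal (Cb * s ^ (1-β)) *
            ∫⁻ τ in Set.Ioc s (2*s), ENNReal.ofReal |b τ| := hstep1
      _ ≤ ENNReal.ofReal (Cb * s ^ (1-β)) *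
            (ENNReal.ofReal (|M| * s ^ ((1 - t*(2+σ))/t)) *
              ENNReal.ofReal (s ^ (1 - 1/t))) := mul_le_mul_right h3 _
      _ = ENNReal.ofReal (Cb * s ^ (1-β) *
            (|M| * s ^ ((1 - t*(2+σ))/t) * s ^ (1 - 1/t))) := by
          rw [← ENNReal.ofReal_mul (by positivity), ← ENNReal.ofReal_mul (by positivity)]
      _ = ENNReal.ofReal (K * (r ^ e * c ^ (k+1))) := by
          congr 1
          calc Cb * s ^ (1-β) * (|M| * s ^ ((1 - t*(2+σ))/t) * s ^ (1 - 1/t))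
              = K * (s ^ (1-β) * (s ^ ((1 - t*(2+σ))/t) * s ^ (1 - 1/t))) := by
                rw [hK_def]; ring
            _ = K * (r ^ e * c ^ (k+1)) := by rw [hexp, hse]
  -- covering (0,r) by dyadic blocks
  have hsub : Set.Ioo (0:ℝ) r ⊆ ⋃ k : ℕ, Set.Ioc (r / 2 ^ (k+1)) (r / 2 ^ k) := by
    intro x hx
    obtain ⟨hx0, hxr⟩ := hx
    have hex : ∃ n : ℕ, r / 2 ^ (n+1) < x := by
      obtain ⟨n, hn⟩ := exists_pow_lt_of_lt_one (div_pos hx0 hr)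
        (by norm_num : (1:ℝ)/2 < 1)
      refine ⟨n, ?_⟩
      have h1 : r * (1/2:ℝ)^n < x := by
        have h2 := mul_lt_mul_of_pos_left hn hr
        rwa [mul_div_cancel₀ _ hr.ne'] at h2
      calc r / 2^(n+1) ≤ r / 2^n := by
            rw [div_le_div_iff₀ (by positivity) (by positivity), pow_succ]
            nlinarith [pow_pos (show (0:ℝ) < 2 by norm_num) n]
        _ = r * (1/2:ℝ)^n := by rw [one_div_pow, mul_one_div]
        _ < x := h1
    refine Set.mem_iUnion.2 ⟨Nat.find hex, Nat.find_spec hex, ?_⟩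
    rcases Nat.eq_zero_or_pos (Nat.find hex) with h0 | h0
    · rw [h0]
      simpa using hxr.le
    · have hmin := Nat.find_min hex (Nat.sub_lt h0 one_pos)
      have heq : Nat.find hex - 1 + 1 = Nat.find hex := by omega
      rw [heq] at hmin
      exact not_lt.1 hmin
  -- put everything together
  calc ENNReal.ofReal (r ^ (β + σ)) *
        ∫⁻ τ in Set.Ioo (0:ℝ) r, ENNReal.ofReal (|b τ| / τ ^ (β - 1))
      ≤ ENNReal.ofReal (r ^ (β + σ)) *
        ∑' k : ℕ, ∫⁻ τ in Set.Ioc (r / 2 ^ (k+1)) (r / 2 ^ k),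
          ENNReal.ofReal (|b τ| / τ ^ (β - 1)) := by
        refine mul_le_mul_right ?_ _
        exact le_trans (lintegral_mono_set hsub) (lintegral_iUnion_le _ _)
    _ ≤ ENNReal.ofReal (r ^ (β + σ)) *
        ∑' k : ℕ, ENNReal.ofReal (K * (r ^ e * c ^ (k+1))) :=
        mul_le_mul_right (ENNReal.tsum_le_tsum hblock) _
    _ = ENNReal.ofReal (r ^ (β + σ)) *
        (ENNReal.ofReal (K * r ^ e) * (ENNReal.ofReal c * (1 - ENNReal.ofReal c)⁻¹)) := by
        congr 1
        rw [← ENNReal.tsum_geometric_add_one, ← ENNReal.tsum_mul_left]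
        congr 1
        funext k
        rw [show K * (r ^ e * c ^ (k+1)) = (K * r ^ e) * c ^ (k+1) from by ring,
          ENNReal.ofReal_mul (mul_nonneg hK0 (Real.rpow_nonneg hr.le _)),
          ENNReal.ofReal_pow hc0.le]
    _ = ENNReal.ofReal (K * c) * (1 - ENNReal.ofReal c)⁻¹ := by
        rw [← mul_assoc, ← mul_assoc,
          ← ENNReal.ofReal_mul (Real.rpow_nonneg hr.le _),
          ← ENNReal.ofReal_mul (by positivity)]
        congr 2
        have h0 : (β + σ) + e = 0 := by rw [he_def]; ring
        calc r ^ (β + σ) * (K * r ^ e) * c = K * c * (r ^ (β + σ) * r ^ e) := by ring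
          _ = K * c := by rw [← Real.rpow_add hr, h0, Real.rpow_zero, mul_one]
    _ ≤ ENNReal.ofReal (K * c * (1 - c)⁻¹) := by
        rw [show (1:ENNReal) - ENNReal.ofReal c = ENNReal.ofReal (1 - c) from by
            rw [ENNReal.ofReal_sub _ hc0.le, ENNReal.ofReal_one],
          ← ENNReal.ofReal_inv_of_pos (by linarith),
          ← ENNReal.ofReal_mul (by positivity)]
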